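/- The number of (isomorphism classes of) trees on n vertices that possess a symmetrical edge is at most the number of rooted trees on n/2 vertices when n is even, and is zero when n is odd. -/

import Mathlib

namespace Stmt19

open SimpleGraph

variable {V W : Type*}

/-- The "double" of a rooted graph: two disjoint copies joined by an edge between roots. -/
def dbl (G : SimpleGraph V) (r : V) : SimpleGraph (V ⊕ V) where
  Adj x y := match x, y with
    | .inl a, .inl b => G.Adj a b
    | .inr a, .inr b => G.Adj a b
    | .inl a, .inr b => a = r ∧ b = r
    | .inr a, .inl b => a = r ∧ b = r
  symm := by
    constructor
    rintro (a|a) (b|b) h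
    · exact h.symm
    · exact ⟨h.2, h.1⟩
    · exact ⟨h.2, h.1⟩
    · exact h.symm
  loopless := by constructor; rintro (a|a) h <;> exact G.irrefl h

/-- Transport of `dbl` along a root-preserving isomorphism. -/
def dblCongr {G : SimpleGraph V} {G' : SimpleGraph W} (e : G ≃g G') {r : V} {r' : W}
    (hr : e r = r') : dbl G r ≃g dbl G' r' where
  toEquiv := Equiv.sumCongr e.toEquiv e.toEquiv
  map_rel_iff' := by
    subst hr
    rintro (a|a) (b|b)
    · exact e.map_adj_iff
    · exact and_congr e.injective.eq_iff e.injective.eq_iff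
    · exact and_congr e.injective.eq_iff e.injective.eq_iff
    · exact e.map_adj_iff

lemma isTree_of_iso {G : SimpleGraph V} {H : SimpleGraph W} (e : G ≃g H) (h : G.IsTree) :
    H.IsTree := by
  constructor
  · rw [connected_iff] at *
    obtain ⟨hp, ⟨x⟩⟩ := (connected_iff _).mp h.isConnected
    refine ⟨fun a b => ?_, ⟨e x⟩⟩
    rw [← e.apply_symm_apply a, ← e.apply_symm_apply b, Iso.reachable_iff]
    exact hp _ _
  · intro x c hc
    exact h.IsAcyclic (c.map e.symm.toHom) (hc.map e.symm.injective)

/-- Transport of a graph along an equivalence of vertex types. -/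
def comapIso (G : SimpleGraph V) (κ : V ≃ W) : G ≃g G.comap ⇑κ.symm where
  toEquiv := κ
  map_rel_iff' := by
    intro a b
    show G.Adj (κ.symm (κ a)) (κ.symm (κ b)) ↔ G.Adj a b
    rw [Equiv.symm_apply_apply, Equiv.symm_apply_apply]


variable (T : SimpleGraph V) (u v : V) in
/-- `T` with the edge `{u,v}` deleted. -/
def del : SimpleGraph V := T.deleteEdges {s(u,v)}

variable {T T' : SimpleGraph V} {u v x y : V}

lemma del_adj {a b : V} : (del T u v).Adj a b ↔ T.Adj a b ∧ s(a,b) ≠ s(u,v) := by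
  simp [del]

lemma del_comm : del T u v = del T v u := by
  rw [del, del, Sym2.eq_swap]

variable (T u v) in
/-- The side of `u` after deleting the edge `{u,v}`. -/
def sideU : Set V := {w | (del T u v).Reachable w u}

lemma mem_sideU {w : V} : w ∈ sideU T u v ↔ (del T u v).Reachable w u := Iff.rfl

lemma not_reach (hT : T.IsTree) (huv : T.Adj u v) : ¬ (del T u v).Reachable u v :=
  ((isBridge_iff).mp (isAcyclic_iff_forall_adj_isBridge.mp hT.IsAcyclic huv))

lemma not_both (hT : T.IsTree) (huv : T.Adj u v) {w : V}
    (h1 : (del T u v).Reachable w u) (h2 : (del T u v).Reachable w v) : False :=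
  not_reach hT huv (h1.symm.trans h2)

lemma cover_aux : ∀ {a b : V} (_ : T.Walk a b),
    ((del T u v).Reachable b u ∨ (del T u v).Reachable b v) →
    ((del T u v).Reachable a u ∨ (del T u v).Reachable a v) := by
  intro a b p
  induction p with
  | nil => exact id
  | cons h p ih =>
    rename_i a z _
    intro hbase
    by_cases he : s(a, z) = s(u, v)
    · rcases Sym2.eq_iff.mp he with ⟨rfl, rfl⟩ | ⟨rfl, rfl⟩
      · exact Or.inl (Reachable.refl _)
      · exact Or.inr (Reachable.refl _)
    · have hadj : (del T u v).Adj a z := del_adj.mpr ⟨h, he⟩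
      rcases ih hbase with h1 | h1
      · exact Or.inl (hadj.reachable.trans h1)
      · exact Or.inr (hadj.reachable.trans h1)

lemma cover (hT : T.IsTree) (huv : T.Adj u v) (w : V) :
    (del T u v).Reachable w u ∨ (del T u v).Reachable w v := by
  obtain ⟨p⟩ := hT.isConnected.preconnected w u
  exact cover_aux p (Or.inl (Reachable.refl _))

/-- Step within a side. -/
lemma reach_step (hxy : T.Adj x y) (hne : s(x,y) ≠ s(u,v)) {p : V}
    (h : (del T u v).Reachable x p) : (del T u v).Reachable y p :=
  (del_adj.mpr ⟨hxy.symm, by rw [Sym2.eq_swap]; exact hne⟩).reachable.trans h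

/-- An isomorphism respecting an edge induces an isomorphism of edge-deleted graphs. -/
def delIso {u' v' : V} (θ : T ≃g T') (hu' : θ u = u') (hv' : θ v = v') :
    del T u v ≃g del T' u' v' where
  toEquiv := θ.toEquiv
  map_rel_iff' := by
    intro a b
    constructor
    · intro h
      obtain ⟨h1, h2⟩ := del_adj.mp h
      refine del_adj.mpr ⟨θ.map_adj_iff.mp h1, fun he => h2 ?_⟩
      have h3 : s(θ.toEquiv a, θ.toEquiv b) = s(θ u, θ v) := congrArg (Sym2.map ⇑θ) he
      rwa [hu', hv'] at h3
    · intro h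
      obtain ⟨h1, h2⟩ := del_adj.mp h
      refine del_adj.mpr ⟨θ.map_adj_iff.mpr h1, fun he => h2 ?_⟩
      rw [← hu', ← hv'] at he
      exact Sym2.map.injective θ.injective he

lemma reach_iff {u' v' : V} (θ : T ≃g T') (hu' : θ u = u') (hv' : θ v = v') (w : V) :
    (del T' u' v').Reachable (θ w) u' ↔ (del T u v).Reachable w u := by
  have := @Iso.reachable_iff _ _ _ _ (delIso θ hu' hv') w u
  rw [show (delIso θ hu' hv') w = θ w from rfl, show (delIso θ hu' hv') u = u' from hu'] at this
  exact this

lemma reach_phi {Φ : T ≃g T} (hΦu : Φ u = v) (hΦv : Φ v = u) (w : V) :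
    (del T u v).Reachable (Φ w) u ↔ (del T u v).Reachable w v := by
  have := reach_iff (T' := T) (u := v) (v := u) (u' := u) (v' := v) Φ hΦv hΦu w
  rwa [← del_comm, ← del_comm] at this

lemma not_mem_sideU_iff (hT : T.IsTree) (huv : T.Adj u v) {w : V} :
    w ∉ sideU T u v ↔ (del T u v).Reachable w v := by
  constructor
  · intro h
    rcases cover hT huv w with h1 | h1
    · exact absurd h1 h
    · exact h1
  · intro h hw
    exact not_both hT huv hw h

lemma cross (hT : T.IsTree) (huv : T.Adj u v) {a b : V}
    (ha : (del T u v).Reachable a u) (hb : (del T u v).Reachable b v) (hab : T.Adj a b) :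
    a = u ∧ b = v := by
  by_cases he : s(a,b) = s(u,v)
  · rcases Sym2.eq_iff.mp he with ⟨rfl, rfl⟩ | ⟨rfl, rfl⟩
    · exact ⟨rfl, rfl⟩
    · exact absurd ha.symm (not_reach hT huv)
  · have h : (del T u v).Adj a b := del_adj.mpr ⟨hab, he⟩
    exact absurd hb (fun hb => not_both hT huv (h.symm.reachable.trans ha) hb)

lemma reach_induce : ∀ {a b : V} (p : (del T u v).Walk a b)
    (ha : a ∈ sideU T u v) (hb : b ∈ sideU T u v),
    (T.induce (sideU T u v)).Reachable ⟨a, ha⟩ ⟨b, hb⟩ := by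
  intro a b p
  induction p with
  | nil => intro ha hb; exact Reachable.refl _
  | cons h p ih =>
    rename_i a z _
    intro ha hb
    have hz : z ∈ sideU T u v := h.symm.reachable.trans ha
    have hadj : (T.induce (sideU T u v)).Adj ⟨a, ha⟩ ⟨z, hz⟩ := by
      simp only [comap_adj, Function.Embedding.coe_subtype]
      exact (del_adj.mp h).1
    exact hadj.reachable.trans (ih hz hb)

lemma induced_isTree (hT : T.IsTree) (huv : T.Adj u v) :
    (T.induce (sideU T u v)).IsTree := by
  constructor
  · rw [connected_iff]
    refine ⟨?_, ⟨⟨u, Reachable.refl _⟩⟩⟩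
    rintro ⟨a, ha⟩ ⟨b, hb⟩
    obtain ⟨p⟩ := (mem_sideU.mp ha).trans (mem_sideU.mp hb).symm
    exact reach_induce p ha hb
  · intro x c hc
    exact hT.IsAcyclic (c.map (SimpleGraph.Embedding.induce (G := T) (sideU T u v)).toHom)
      (hc.map (SimpleGraph.Embedding.induce (G := T) (sideU T u v)).injective)


section Main
variable {T T' : SimpleGraph V} {u v : V}

open Classical in
/-- The decomposition of the vertex set of a tree with a symmetrical edge. -/
noncomputable def mainEquiv (Φ : T ≃g T) (hT : T.IsTree) (huv : T.Adj u v)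
    (hΦu : Φ u = v) (hΦv : Φ v = u) :
    V ≃ ↥(sideU T u v) ⊕ ↥(sideU T u v) :=
  (Equiv.sumCompl (· ∈ sideU T u v)).symm.trans
    (Equiv.sumCongr (Equiv.refl _)
      (Φ.toEquiv.subtypeEquiv (fun w => by
        rw [not_mem_sideU_iff hT huv, mem_sideU]
        exact (reach_phi hΦu hΦv w).symm)))

open Classical in
/-- A tree with a symmetrical edge is the double of the side of `u`, rooted at `u`. -/
noncomputable def mainIso (Φ : T ≃g T) (hT : T.IsTree) (huv : T.Adj u v)
    (hΦu : Φ u = v) (hΦv : Φ v = u) :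
    T ≃g dbl (T.induce (sideU T u v)) ⟨u, Reachable.refl _⟩ where
  toEquiv := mainEquiv Φ hT huv hΦu hΦv
  map_rel_iff' := by
    intro a b
    have happ : ∀ (w : V), (mainEquiv Φ hT huv hΦu hΦv) w =
        if h : w ∈ sideU T u v then Sum.inl ⟨w, h⟩
        else Sum.inr ⟨Φ w, by
          rw [mem_sideU, reach_phi hΦu hΦv]
          exact (not_mem_sideU_iff hT huv).mp h⟩ := by
      intro w
      by_cases h : w ∈ sideU T u v
      · rw [dif_pos h]
        simp only [mainEquiv, Equiv.trans_apply]
        rw [Equiv.sumCompl_symm_apply_of_pos h]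
        rfl
      · rw [dif_neg h]
        simp only [mainEquiv, Equiv.trans_apply]
        rw [Equiv.sumCompl_symm_apply_of_neg h]
        rfl
    by_cases ha : a ∈ sideU T u v <;> by_cases hb : b ∈ sideU T u v <;>
      rw [happ a, happ b]
    · rw [dif_pos ha, dif_pos hb]
      exact Iff.rfl
    · rw [dif_pos ha, dif_neg hb]
      show (⟨a, ha⟩ : ↥(sideU T u v)) = ⟨u, _⟩ ∧ (⟨Φ b, _⟩ : ↥(sideU T u v)) = ⟨u, _⟩ ↔ _
      refine (and_congr Subtype.ext_iff Subtype.ext_iff).trans (?_ : a = u ∧ Φ b = u ↔ _)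
      constructor
      · rintro ⟨rfl, h2⟩
        have : b = v := Φ.injective (by rw [h2, hΦv])
        subst this
        exact huv
      · intro hab
        obtain ⟨h1, h2⟩ := cross hT huv ha ((not_mem_sideU_iff hT huv).mp hb) hab
        exact ⟨h1, by rw [h2, hΦv]⟩
    · rw [dif_neg ha, dif_pos hb]
      show (⟨Φ a, _⟩ : ↥(sideU T u v)) = ⟨u, _⟩ ∧ (⟨b, hb⟩ : ↥(sideU T u v)) = ⟨u, _⟩ ↔ _
      refine (and_congr Subtype.ext_iff Subtype.ext_iff).trans (?_ : Φ a = u ∧ b = u ↔ _)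
      constructor
      · rintro ⟨h1, rfl⟩
        have : a = v := Φ.injective (by rw [h1, hΦv])
        subst this
        exact huv.symm
      · intro hab
        obtain ⟨h1, h2⟩ := cross hT huv hb ((not_mem_sideU_iff hT huv).mp ha) hab.symm
        exact ⟨by rw [h2, hΦv], h1⟩
    · rw [dif_neg ha, dif_neg hb]
      show T.Adj (Φ a) (Φ b) ↔ T.Adj a b
      exact Φ.map_adj_iff

lemma two_mul_card_side (Φ : T ≃g T) (hT : T.IsTree) (huv : T.Adj u v)
    (hΦu : Φ u = v) (hΦv : Φ v = u) :
    2 * Nat.card ↥(sideU T u v) = Nat.card V := by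
  classical
  cases finite_or_infinite V
  · rw [Nat.card_congr (mainEquiv Φ hT huv hΦu hΦv), Nat.card_sum]
    ring
  · have hinf : Infinite ↥(sideU T u v) := by
      by_contra h
      rw [not_infinite_iff_finite] at h
      haveI := h
      haveI : Finite V := Finite.of_equiv _ (mainEquiv Φ hT huv hΦu hΦv).symm
      exact not_finite V
    rw [Nat.card_eq_zero_of_infinite, Nat.card_eq_zero_of_infinite, mul_zero]
/-- A tree isomorphism respecting the symmetrical edges restricts to the sides. -/
def restrictIso {u' v' : V} (θ : T ≃g T') (hu' : θ u = u') (hv' : θ v = v') :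
    T.induce (sideU T u v) ≃g T'.induce (sideU T' u' v') where
  toEquiv := θ.toEquiv.subtypeEquiv (fun w => by
    rw [mem_sideU, mem_sideU]
    exact (reach_iff θ hu' hv' w).symm)
  map_rel_iff' := by
    intro a b
    simp only [Equiv.subtypeEquiv_apply, comap_adj, Function.Embedding.coe_subtype]
    exact θ.map_adj_iff

lemma sym_edge_unique_aux [Finite V] {x y : V} (hT : T.IsTree)
    (huv : T.Adj u v) (Φ : T ≃g T) (hΦu : Φ u = v) (hΦv : Φ v = u)
    (hxy : T.Adj x y) (Φ₂ : T ≃g T) (h₂x : Φ₂ x = y) (h₂y : Φ₂ y = x)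
    (hne : s(u,v) ≠ s(x,y))
    (hxB : (del T u v).Reachable x v) (huD : (del T x y).Reachable u y) : False := by
  have htrans : ∀ {w z : V} (_ : (del T x y).Walk w z), (del T x y).Reachable z x →
      (del T u v).Reachable w z := by
    intro w z p
    induction p with
    | nil => intro _; exact Reachable.refl _
    | cons h p ih =>
      rename_i a c _
      intro hz
      refine ((del_adj.mpr ⟨(del_adj.mp h).1, ?_⟩).reachable).trans (ih hz)
      intro he
      rcases Sym2.eq_iff.mp he with ⟨rfl, rfl⟩ | ⟨rfl, rfl⟩
      · exact not_both hT hxy (h.reachable.trans (p.reachable.trans hz)) huD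
      · exact not_both hT hxy (p.reachable.trans hz) huD
  have hCB : ∀ w, (del T x y).Reachable w x → (del T u v).Reachable w v := by
    intro w hw
    obtain ⟨p⟩ := hw
    exact (htrans p (Reachable.refl _)).trans hxB
  have h1 : 2 * Nat.card ↥(sideU T v u) = Nat.card V :=
    two_mul_card_side Φ hT huv.symm hΦv hΦu
  have h2 : 2 * Nat.card ↥(sideU T x y) = Nat.card V :=
    two_mul_card_side Φ₂ hT hxy h₂x h₂y
  have hsub : sideU T x y ⊆ sideU T v u := by
    intro w hw
    rw [mem_sideU, ← del_comm]
    exact hCB w hw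
  have hBC : sideU T x y = sideU T v u := by
    apply Set.eq_of_subset_of_ncard_le hsub ?_ (Set.toFinite _)
    rw [← Nat.card_coe_set_eq, ← Nat.card_coe_set_eq]
    omega
  have hv1 : v ∈ sideU T v u := Reachable.refl _
  rw [← hBC, mem_sideU] at hv1
  have hv2 : (del T x y).Reachable v y :=
    (del_adj.mpr ⟨huv.symm, fun he => hne (by rw [Sym2.eq_swap]; exact he)⟩).reachable.trans huD
  exact not_both hT hxy hv1 hv2

/-- Uniqueness of the symmetrical edge of a tree. -/
theorem sym_edge_unique [Finite V] {x y : V} (hT : T.IsTree)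
    (huv : T.Adj u v) (Φ : T ≃g T) (hΦu : Φ u = v) (hΦv : Φ v = u)
    (hxy : T.Adj x y) (Φ₂ : T ≃g T) (h₂x : Φ₂ x = y) (h₂y : Φ₂ y = x) :
    s(u,v) = s(x,y) := by
  by_contra hne
  rcases cover hT huv x with hxu | hxv <;> rcases cover hT hxy u with hux | huy
  · refine sym_edge_unique_aux hT huv.symm Φ hΦv hΦu hxy.symm Φ₂ h₂y h₂x ?_ ?_ ?_
    · intro h; exact hne (Sym2.eq_swap.trans (h.trans Sym2.eq_swap))
    · rw [← del_comm]
      exact reach_step hxy (fun h => hne h.symm) hxu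
    · rw [← del_comm]
      exact reach_step huv (fun h => hne h) hux
  · refine sym_edge_unique_aux hT huv.symm Φ hΦv hΦu hxy Φ₂ h₂x h₂y ?_ ?_ ?_
    · intro h; exact hne (Sym2.eq_swap.trans h)
    · rw [← del_comm]; exact hxu
    · exact reach_step huv (fun h => hne h) huy
  · refine sym_edge_unique_aux hT huv Φ hΦu hΦv hxy.symm Φ₂ h₂y h₂x ?_ ?_ ?_
    · intro h; exact hne (h.trans Sym2.eq_swap)
    · exact reach_step hxy (fun h => hne h.symm) hxv
    · rw [← del_comm]; exact hux
  · exact sym_edge_unique_aux hT huv Φ hΦu hΦv hxy Φ₂ h₂x h₂y hne hxv huy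

end Main
section Assembly

abbrev SymSub (n : ℕ) := {G : SimpleGraph (Fin n) //
    G.IsTree ∧ ∃ u v : Fin n, G.Adj u v ∧ ∃ Φ : G ≃g G, Φ u = v ∧ Φ v = u}

abbrev RootSub (m : ℕ) := {P : SimpleGraph (Fin m) × Fin m // P.1.IsTree}

/-- The rooted tree obtained from a tree with a symmetrical edge. -/
def Linked {n m : ℕ} (x : SymSub n) (y : RootSub m) : Prop :=
  ∃ (u v : Fin n) (_ : x.1.Adj u v) (Φ : x.1 ≃g x.1) (_ : Φ u = v) (_ : Φ v = u)
    (e : x.1.induce (sideU x.1 u v) ≃g y.1.1), e ⟨u, Reachable.refl _⟩ = y.1.2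

lemma exists_linked {n : ℕ} (hn : Even n) (x : SymSub n) : ∃ y : RootSub (n/2), Linked x y := by
  obtain ⟨hT, u, v, huv, Φ, h1, h2⟩ := x.2
  haveI : Fintype ↥(sideU x.1 u v) := Fintype.ofFinite _
  have hcard : Fintype.card ↥(sideU x.1 u v) = n / 2 := by
    have h := two_mul_card_side Φ hT huv h1 h2
    rw [Nat.card_eq_fintype_card, Nat.card_eq_fintype_card, Fintype.card_fin] at h
    obtain ⟨k, hk⟩ := hn
    omega
  let κ : ↥(sideU x.1 u v) ≃ Fin (n/2) := Fintype.equivFinOfCardEq hcard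
  let ι := comapIso (x.1.induce (sideU x.1 u v)) κ
  refine ⟨⟨((x.1.induce (sideU x.1 u v)).comap ⇑κ.symm, κ ⟨u, Reachable.refl _⟩), ?_⟩,
    u, v, huv, Φ, h1, h2, ι, rfl⟩
  exact isTree_of_iso ι (induced_isTree hT huv)

lemma linked_congr {n m : ℕ} {x x' : SymSub n} {y y' : RootSub m}
    (hxy : Linked x y) (hxy' : Linked x' y') (h : Nonempty (x.1 ≃g x'.1)) :
    ∃ e : y.1.1 ≃g y'.1.1, e y.1.2 = y'.1.2 := by
  obtain ⟨u, v, huv, Φ, h1, h2, ρ, hρ⟩ := hxy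
  obtain ⟨u', v', huv', Φ', h1', h2', ρ', hρ'⟩ := hxy'
  obtain ⟨θ⟩ := h
  have hT := x.2.1
  have hT' := x'.2.1
  have hΞ1 : ((θ.symm.trans Φ).trans θ) (θ u) = θ v := by
    show θ (Φ (θ.symm (θ u))) = θ v
    rw [θ.symm_apply_apply, h1]
  have hΞ2 : ((θ.symm.trans Φ).trans θ) (θ v) = θ u := by
    show θ (Φ (θ.symm (θ v))) = θ u
    rw [θ.symm_apply_apply, h2]
  have hadj' : x'.1.Adj (θ u) (θ v) := θ.map_adj_iff.mpr huv
  have hQ : s(θ u, θ v) = s(u', v') :=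
    sym_edge_unique hT' hadj' _ hΞ1 hΞ2 huv' Φ' h1' h2'
  obtain ⟨θ₀, hθu, hθv⟩ : ∃ θ₀ : x.1 ≃g x'.1, θ₀ u = u' ∧ θ₀ v = v' := by
    rcases Sym2.eq_iff.mp hQ with ⟨ha, hb⟩ | ⟨ha, hb⟩
    · exact ⟨θ, ha, hb⟩
    · refine ⟨θ.trans Φ', ?_, ?_⟩
      · show Φ' (θ u) = u'
        rw [ha, h2']
      · show Φ' (θ v) = v'
        rw [hb, h1']
  refine ⟨(ρ.symm.trans (restrictIso θ₀ hθu hθv)).trans ρ', ?_⟩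
  show ρ' ((restrictIso θ₀ hθu hθv) (ρ.symm y.1.2)) = y'.1.2
  rw [← hρ, ρ.symm_apply_apply]
  have hres : (restrictIso θ₀ hθu hθv) ⟨u, Reachable.refl _⟩ =
      (⟨u', Reachable.refl _⟩ : ↥(sideU x'.1 u' v')) := Subtype.ext hθu
  rw [hres, hρ']

lemma linked_inj {n m : ℕ} {x x' : SymSub n} {y y' : RootSub m}
    (hxy : Linked x y) (hxy' : Linked x' y')
    (h : ∃ e : y.1.1 ≃g y'.1.1, e y.1.2 = y'.1.2) : Nonempty (x.1 ≃g x'.1) := by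
  obtain ⟨u, v, huv, Φ, h1, h2, ρ, hρ⟩ := hxy
  obtain ⟨u', v', huv', Φ', h1', h2', ρ', hρ'⟩ := hxy'
  obtain ⟨e, he⟩ := h
  have hT := x.2.1
  have hT' := x'.2.1
  have hσ : ((ρ.trans e).trans ρ'.symm) ⟨u, Reachable.refl _⟩ =
      (⟨u', Reachable.refl _⟩ : ↥(sideU x'.1 u' v')) := by
    show ρ'.symm (e (ρ _)) = _
    rw [hρ, he, ← hρ', ρ'.symm_apply_apply]
  exact ⟨(mainIso Φ hT huv h1 h2).trans
    ((dblCongr ((ρ.trans e).trans ρ'.symm) hσ).trans (mainIso Φ' hT' huv' h1' h2').symm)⟩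

lemma rRoot_equivalence (m : ℕ) : Equivalence (fun P Q : RootSub m =>
    ∃ e : P.1.1 ≃g Q.1.1, e P.1.2 = Q.1.2) := by
  constructor
  · exact fun P => ⟨RelIso.refl _, rfl⟩
  · rintro P Q ⟨e, he⟩
    exact ⟨e.symm, by rw [← he, e.symm_apply_apply]⟩
  · rintro P Q R ⟨e, he⟩ ⟨f, hf⟩
    refine ⟨e.trans f, ?_⟩
    show f (e P.1.2) = R.1.2
    rw [he, hf]

end Assembly

end Stmt19

/-- The number of isomorphism classes of trees on n vertices possessing a symmetrical
edge (an edge whose endpoints are swapped by some automorphism). -/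
noncomputable def numSymEdgeTrees (n : ℕ) : ℕ :=
  Nat.card (Quot (fun G H : {G : SimpleGraph (Fin n) //
      G.IsTree ∧ ∃ u v : Fin n, G.Adj u v ∧ ∃ Φ : G ≃g G, Φ u = v ∧ Φ v = u} =>
    Nonempty (G.1 ≃g H.1)))

/-- The number of isomorphism classes of rooted trees on m vertices. -/
noncomputable def numRootedTrees (m : ℕ) : ℕ :=
  Nat.card (Quot (fun P Q : {P : SimpleGraph (Fin m) × Fin m // P.1.IsTree} =>
    ∃ e : P.1.1 ≃g Q.1.1, e P.1.2 = Q.1.2))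

/-- The number of trees on n vertices with a symmetrical edge is at most
the number of rooted trees on n/2 vertices when n is even, and is zero when n is odd. -/
theorem stmt19 (n : ℕ) :
    (Even n → numSymEdgeTrees n ≤ numRootedTrees (n / 2)) ∧
    (Odd n → numSymEdgeTrees n = 0) := by
  constructor
  · intro hn
    unfold numSymEdgeTrees numRootedTrees
    haveI : Finite (Quot (fun P Q : {P : SimpleGraph (Fin (n / 2)) × Fin (n / 2) // P.1.IsTree} =>
        ∃ e : P.1.1 ≃g Q.1.1, e P.1.2 = Q.1.2)) :=
      Finite.of_surjective _ Quot.mk_surjective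
    have hF : ∀ x : Stmt19.SymSub n, Stmt19.Linked x (Classical.choose (Stmt19.exists_linked hn x)) :=
      fun x => Classical.choose_spec (Stmt19.exists_linked hn x)
    refine Nat.card_le_card_of_injective
      (Quot.lift (fun x => Quot.mk _ (Classical.choose (Stmt19.exists_linked hn x)))
        (fun a b hab => Quot.sound (Stmt19.linked_congr (hF a) (hF b) hab))) ?_
    have key : ∀ a b : Stmt19.SymSub n,
        (Quot.mk (fun P Q : Stmt19.RootSub (n / 2) => ∃ e : P.1.1 ≃g Q.1.1, e P.1.2 = Q.1.2)
            (Classical.choose (Stmt19.exists_linked hn a)) =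
          Quot.mk _ (Classical.choose (Stmt19.exists_linked hn b))) →
        (Quot.mk _ a : Quot (fun G H : Stmt19.SymSub n => Nonempty (G.1 ≃g H.1))) = Quot.mk _ b := by
      intro a b hab
      refine Quot.sound (Stmt19.linked_inj (hF a) (hF b) ?_)
      exact ((Stmt19.rRoot_equivalence (n / 2)).eqvGen_iff).mp (Quot.eqvGen_exact hab)
    intro q q'
    induction q using Quot.ind with | _ a =>
    induction q' using Quot.ind with | _ b =>
    exact key a b
  · intro hn
    unfold numSymEdgeTrees
    haveI hempty : IsEmpty {G : SimpleGraph (Fin n) //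
        G.IsTree ∧ ∃ u v : Fin n, G.Adj u v ∧ ∃ Φ : G ≃g G, Φ u = v ∧ Φ v = u} := by
      constructor
      rintro ⟨G, hT, u, v, huv, Φ, h1, h2⟩
      have h := Stmt19.two_mul_card_side Φ hT huv h1 h2
      rw [Nat.card_eq_fintype_card (α := Fin n), Fintype.card_fin] at h
      exact (Nat.not_even_iff_odd.mpr hn) ⟨Nat.card ↥(Stmt19.sideU G u v), by omega⟩
    haveI : IsEmpty (Quot (fun G H : {G : SimpleGraph (Fin n) //
        G.IsTree ∧ ∃ u v : Fin n, G.Adj u v ∧ ∃ Φ : G ≃g G, Φ u = v ∧ Φ v = u} =>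
      Nonempty (G.1 ≃g H.1))) :=
      ⟨fun q => Quot.ind (β := fun _ => False) (fun a => hempty.false a) q⟩
    exact Nat.card_of_isEmpty
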